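/- First RP theorem: if H ∈ hom(𝓗₋₊) satisfies 𝔉ₛ(-H) ≥ 0 (i.e. 𝔉ₛ(-H) is positive semidefinite on 𝓗₊₋), then H has the reflection-positivity property: ⟨θ(x') ⊗ x', e^{-βH}(θ(x) ⊗ x)⟩_{𝓗₋₊} ≥ 0 for all x, x' ∈ 𝓗₊ and all β ≥ 0. -/

import Mathlib

open scoped ComplexInnerProductSpace ComplexOrder

open Complex Finset

lemma RP_sum_swap4 {ι κ₁ κ₂ : Type*} [Fintype ι] [Fintype κ₁] [Fintype κ₂]
    (f : ι → ι → κ₁ → κ₂ → ℂ) :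
    ∑ m : ι, ∑ n : ι, ∑ a : κ₁, ∑ b : κ₂, f m n a b
      = ∑ a : κ₁, ∑ b : κ₂, ∑ m : ι, ∑ n : ι, f m n a b :=
  calc ∑ m : ι, ∑ n : ι, ∑ a : κ₁, ∑ b : κ₂, f m n a b
      = ∑ m : ι, ∑ a : κ₁, ∑ n : ι, ∑ b : κ₂, f m n a b :=
        Finset.sum_congr rfl fun m _ => Finset.sum_comm
    _ = ∑ a : κ₁, ∑ m : ι, ∑ n : ι, ∑ b : κ₂, f m n a b := Finset.sum_comm
    _ = ∑ a : κ₁, ∑ m : ι, ∑ b : κ₂, ∑ n : ι, f m n a b :=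
        Finset.sum_congr rfl fun a _ => Finset.sum_congr rfl fun m _ => Finset.sum_comm
    _ = ∑ a : κ₁, ∑ b : κ₂, ∑ m : ι, ∑ n : ι, f m n a b :=
        Finset.sum_congr rfl fun a _ => Finset.sum_comm

lemma RP_aux_scalar {ι κ₁ κ₂ : Type*} [Fintype ι] [Fintype κ₁] [Fintype κ₂]
    (g : κ₁ → ι → ℂ) (h : κ₂ → ι → ℂ) :
    0 ≤ ∑ m : ι, ∑ n : ι,
      (∑ a : κ₁, (starRingEnd ℂ) (g a m) * g a n) * (∑ b : κ₂, (starRingEnd ℂ) (h b m) * h b n) := by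
  have key : (∑ m : ι, ∑ n : ι,
      (∑ a : κ₁, (starRingEnd ℂ) (g a m) * g a n) * (∑ b : κ₂, (starRingEnd ℂ) (h b m) * h b n))
      = ∑ a : κ₁, ∑ b : κ₂,
        (starRingEnd ℂ) (∑ m : ι, g a m * h b m) * (∑ n : ι, g a n * h b n) := by
    have e1 : (∑ m : ι, ∑ n : ι,
        (∑ a : κ₁, (starRingEnd ℂ) (g a m) * g a n) * (∑ b : κ₂, (starRingEnd ℂ) (h b m) * h b n))
        = ∑ m : ι, ∑ n : ι, ∑ a : κ₁, ∑ b : κ₂,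
            ((starRingEnd ℂ) (g a m) * g a n) * ((starRingEnd ℂ) (h b m) * h b n) :=
      Finset.sum_congr rfl fun m _ => Finset.sum_congr rfl fun n _ => Finset.sum_mul_sum _ _ _ _
    rw [e1, RP_sum_swap4]
    refine Finset.sum_congr rfl fun a _ => Finset.sum_congr rfl fun b _ => ?_
    rw [map_sum]
    rw [Finset.sum_mul_sum]
    refine Finset.sum_congr rfl fun m _ => Finset.sum_congr rfl fun n _ => by
      rw [map_mul]; ring
  rw [key]
  exact Finset.sum_nonneg fun a _ => Finset.sum_nonneg fun b _ => star_mul_self_nonneg _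

lemma RP_gram_repr {E : Type} [NormedAddCommGroup E] [InnerProductSpace ℂ E]
    [FiniteDimensional ℂ E] (A : E →L[ℂ] E) (hA : ∀ w : E, 0 ≤ ⟪w, A w⟫) :
    ∃ g : Fin (Module.finrank ℂ E) → E → ℂ,
      ∀ p q : E, ⟪p, A q⟫ = ∑ a, (starRingEnd ℂ) (g a p) * g a q := by
  have hreal : ∀ v : E, (starRingEnd ℂ) ⟪v, A v⟫ = ⟪v, A v⟫ := by
    intro v
    obtain ⟨hre, him⟩ := Complex.nonneg_iff.mp (hA v)
    exact Complex.conj_eq_iff_im.mpr him.symm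
  have hsym : (A : E →ₗ[ℂ] E).IsSymmetric := by
    rw [LinearMap.isSymmetric_iff_inner_map_self_real]
    intro v
    simp only [ContinuousLinearMap.coe_coe]
    have e : ⟪A v, v⟫ = (starRingEnd ℂ) ⟪v, A v⟫ := (inner_conj_symm (A v) v).symm
    rw [e, Complex.conj_conj]
    exact (hreal v).symm
  let b := hsym.eigenvectorBasis rfl
  let μ : Fin (Module.finrank ℂ E) → ℝ := hsym.eigenvalues rfl
  have happ : ∀ a, A (b a) = (μ a : ℂ) • b a := fun a => hsym.apply_eigenvectorBasis rfl a
  have hμ : ∀ a, 0 ≤ μ a := by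
    intro a
    have hbb : ⟪b a, b a⟫ = (1 : ℂ) := by
      rw [@inner_self_eq_norm_sq_to_K ℂ, b.orthonormal.1 a]
      norm_num
    have h1 : ⟪b a, A (b a)⟫ = (μ a : ℂ) := by
      rw [happ a, inner_smul_right, hbb, mul_one]
    have := hA (b a)
    rw [h1] at this
    exact Complex.zero_le_real.mp this
  refine ⟨fun a p => (Real.sqrt (μ a) : ℂ) * ⟪b a, p⟫, fun p q => ?_⟩
  have hq : A q = ∑ a, ⟪b a, q⟫ • ((μ a : ℂ) • b a) := by
    conv_lhs => rw [← b.sum_repr' q]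
    rw [map_sum]
    exact Finset.sum_congr rfl fun a _ => by rw [ContinuousLinearMap.map_smul, happ a]
  rw [hq, inner_sum]
  refine Finset.sum_congr rfl fun a _ => ?_
  have hsq : ((μ a : ℝ) : ℂ) = (Real.sqrt (μ a) : ℂ) * (Real.sqrt (μ a) : ℂ) := by
    rw [← Complex.ofReal_mul, Real.mul_self_sqrt (hμ a)]
  rw [inner_smul_right, inner_smul_right, ← inner_conj_symm p (b a), map_mul,
    Complex.conj_ofReal, hsq]
  ring

lemma RP_psd_double {E : Type} [NormedAddCommGroup E] [InnerProductSpace ℂ E]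
    [FiniteDimensional ℂ E] (A B : E →L[ℂ] E)
    (hA : ∀ w : E, 0 ≤ ⟪w, A w⟫) (hB : ∀ w : E, 0 ≤ ⟪w, B w⟫)
    {ι : Type*} [Fintype ι] (u v : ι → E) :
    0 ≤ ∑ m : ι, ∑ n : ι, ⟪u m, A (u n)⟫ * ⟪v m, B (v n)⟫ := by
  obtain ⟨g, hg⟩ := RP_gram_repr A hA
  obtain ⟨h, hh⟩ := RP_gram_repr B hB
  simp only [hg, hh]
  exact RP_aux_scalar (fun a m => g a (u m)) (fun b m => h b (v m))

lemma RP_sesq_expand {E : Type} [NormedAddCommGroup E] [InnerProductSpace ℂ E]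
    (M : E →L[ℂ] E) {α : Type*} (s : Finset α) (c : α → ℂ) (v : α → E) :
    ⟪∑ i ∈ s, c i • v i, M (∑ j ∈ s, c j • v j)⟫
      = ∑ i ∈ s, ∑ j ∈ s, (starRingEnd ℂ) (c i) * c j * ⟪v i, M (v j)⟫ := by
  rw [map_sum, sum_inner]
  refine Finset.sum_congr rfl fun i _ => ?_
  rw [inner_sum]
  refine Finset.sum_congr rfl fun j _ => ?_
  rw [ContinuousLinearMap.map_smul, inner_smul_left, inner_smul_right]
  ring

lemma RP_psd_double' {E : Type} [NormedAddCommGroup E] [InnerProductSpace ℂ E]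
    [FiniteDimensional ℂ E] (A B : E →L[ℂ] E)
    (hA : ∀ w : E, 0 ≤ ⟪w, A w⟫) (hB : ∀ w : E, 0 ≤ ⟪w, B w⟫)
    {α : Type*} (s : Finset α) {ι : Type*} [Fintype ι] (u v : α → ι → E) :
    0 ≤ ∑ i ∈ s, ∑ j ∈ s, ∑ k : ι, ∑ l : ι, ⟪u i l, A (u j k)⟫ * ⟪v i l, B (v j k)⟫ := by
  have base := RP_psd_double A B hA hB (ι := ↥s × ι)
    (fun m => u m.1.1 m.2) (fun m => v m.1.1 m.2)
  have conv1 : (∑ m : ↥s × ι, ∑ n : ↥s × ι,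
        ⟪u m.1.1 m.2, A (u n.1.1 n.2)⟫ * ⟪v m.1.1 m.2, B (v n.1.1 n.2)⟫)
      = ∑ i ∈ s, ∑ j ∈ s, ∑ k : ι, ∑ l : ι, ⟪u i l, A (u j k)⟫ * ⟪v i l, B (v j k)⟫ := by
    rw [Fintype.sum_prod_type]
    rw [Finset.sum_coe_sort s (fun i => ∑ l : ι, ∑ n : ↥s × ι,
      ⟪u i l, A (u n.1.1 n.2)⟫ * ⟪v i l, B (v n.1.1 n.2)⟫)]
    refine Finset.sum_congr rfl fun i _ => ?_
    have inner1 : ∀ l : ι, (∑ n : ↥s × ι, ⟪u i l, A (u n.1.1 n.2)⟫ * ⟪v i l, B (v n.1.1 n.2)⟫)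
        = ∑ j ∈ s, ∑ k : ι, ⟪u i l, A (u j k)⟫ * ⟪v i l, B (v j k)⟫ := by
      intro l
      rw [Fintype.sum_prod_type]
      rw [Finset.sum_coe_sort s (fun j => ∑ k : ι, ⟪u i l, A (u j k)⟫ * ⟪v i l, B (v j k)⟫)]
    calc (∑ l : ι, ∑ n : ↥s × ι, ⟪u i l, A (u n.1.1 n.2)⟫ * ⟪v i l, B (v n.1.1 n.2)⟫)
        = ∑ l : ι, ∑ j ∈ s, ∑ k : ι, ⟪u i l, A (u j k)⟫ * ⟪v i l, B (v j k)⟫ :=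
          Finset.sum_congr rfl fun l _ => inner1 l
      _ = ∑ j ∈ s, ∑ l : ι, ∑ k : ι, ⟪u i l, A (u j k)⟫ * ⟪v i l, B (v j k)⟫ := Finset.sum_comm
      _ = ∑ j ∈ s, ∑ k : ι, ∑ l : ι, ⟪u i l, A (u j k)⟫ * ⟪v i l, B (v j k)⟫ :=
          Finset.sum_congr rfl fun j _ => Finset.sum_comm
  rw [← conv1]
  exact base


/-- **First RP theorem.** If `𝔉ₛ(-H) ≥ 0` then `H` has the reflection-positivity
property: `⟨θ(x') ⊗ x', e^{-βH} (θ(x) ⊗ x)⟩ ≥ 0` for all `x, x'` and `β ≥ 0`. -/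
theorem first_RP_theorem
{Hp Hm Hmp Hpm : Type}
    [NormedAddCommGroup Hp] [InnerProductSpace ℂ Hp] [FiniteDimensional ℂ Hp]
    [NormedAddCommGroup Hm] [InnerProductSpace ℂ Hm] [FiniteDimensional ℂ Hm]
    [NormedAddCommGroup Hmp] [InnerProductSpace ℂ Hmp] [FiniteDimensional ℂ Hmp]
    [NormedAddCommGroup Hpm] [InnerProductSpace ℂ Hpm] [FiniteDimensional ℂ Hpm]
(θ : Hp ≃ₗ⋆[ℂ] Hm)
    (hθ : ∀ x x' : Hp, ⟪x, x'⟫ = ⟪θ x', θ x⟫)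
(tmp : Hm →ₗ[ℂ] Hp →ₗ[ℂ] Hmp) (tpm : Hp →ₗ[ℂ] Hm →ₗ[ℂ] Hpm)
    (htmp : ∀ (y : Hm) (x : Hp) (y' : Hm) (x' : Hp),
      ⟪tmp y x, tmp y' x'⟫ = ⟪y, y'⟫ * ⟪x, x'⟫)
    (htpm : ∀ (x : Hp) (y : Hm) (x' : Hp) (y' : Hm),
      ⟪tpm x y, tpm x' y'⟫ = ⟪x, x'⟫ * ⟪y, y'⟫)
    (hmp_span : ⊤ ≤ Submodule.span ℂ (Set.range fun p : Hm × Hp => tmp p.1 p.2))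
    (hpm_span : ⊤ ≤ Submodule.span ℂ (Set.range fun p : Hp × Hm => tpm p.1 p.2))
(Fs : (Hmp →L[ℂ] Hmp) → (Hpm →L[ℂ] Hpm))
    (hFs : ∀ (T : Hmp →L[ℂ] Hmp) (x x' : Hp) (y y' : Hm),
      ⟪tpm x y, Fs T (tpm x' y')⟫ = ⟪tmp (θ x') x, T (tmp y' (θ.symm y))⟫)
    (H : Hmp →L[ℂ] Hmp)
    (hpos : ∀ w : Hpm, 0 ≤ ⟪w, Fs (-H) w⟫) :
    ∀ (x x' : Hp) (β : ℝ), 0 ≤ β →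
      0 ≤ ⟪tmp (θ x') x', NormedSpace.exp ((-β : ℂ) • H) (tmp (θ x) x)⟫ := by
  intro x x' β hβ
  classical
  -- an orthonormal basis of `Hp`
  set ι := Fin (Module.finrank ℂ Hp) with hι
  set f : OrthonormalBasis ι ℂ Hp := stdOrthonormalBasis ℂ Hp with hf
  -- the family `tmp (θ (f k)) (f l)` is an orthonormal basis of `Hmp`
  have hon : Orthonormal ℂ (fun p : ι × ι => tmp (θ (f p.1)) (f p.2)) := by
    rw [orthonormal_iff_ite]
    rintro ⟨k, l⟩ ⟨k', l'⟩
    have hff := orthonormal_iff_ite.mp f.orthonormal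
    rw [htmp, ← hθ (f k') (f k), hff, hff]
    by_cases hk : k = k' <;> by_cases hl : l = l' <;>
      simp [hk, hl, Prod.ext_iff, eq_comm]
  have hspan : ⊤ ≤ Submodule.span ℂ
      (Set.range fun p : ι × ι => tmp (θ (f p.1)) (f p.2)) := by
    refine le_trans hmp_span (Submodule.span_le.mpr ?_)
    rintro _ ⟨⟨y, z⟩, rfl⟩
    have hy : y = ∑ k : ι, (starRingEnd ℂ) ⟪f k, θ.symm y⟫ • θ (f k) := by
      conv_lhs => rw [← θ.apply_symm_apply y, ← f.sum_repr' (θ.symm y)]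
      rw [map_sum]
      exact Finset.sum_congr rfl fun k _ => θ.map_smulₛₗ _ _
    have hz : (z : Hp) = ∑ l : ι, ⟪f l, z⟫ • f l := (f.sum_repr' z).symm
    rw [hy, hz]
    simp only [map_sum, map_smul, LinearMap.sum_apply, LinearMap.smul_apply]
    refine Submodule.sum_mem _ fun k _ => Submodule.smul_mem _ _ ?_
    refine Submodule.sum_mem _ fun l _ => Submodule.smul_mem _ _ ?_
    exact Submodule.subset_span ⟨(l, k), rfl⟩
  set b : OrthonormalBasis (ι × ι) ℂ Hmp := OrthonormalBasis.mk hon hspan with hb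
  -- key identity specialised to the diagonal
  have key : ∀ (T : Hmp →L[ℂ] Hmp) (u u' : Hp),
      ⟪tpm u' (θ u), Fs T (tpm u' (θ u))⟫ = ⟪tmp (θ u') u', T (tmp (θ u) u)⟫ := by
    intro T u u'
    have h := hFs T u' u' (θ u) (θ u)
    rwa [θ.symm_apply_apply] at h
  -- kernel identity for composition
  have kernel : ∀ (T S : Hmp →L[ℂ] Hmp) (x₁ x₂ : Hp) (y₁ y₂ : Hm),
      ⟪tpm x₁ y₁, Fs (T * S) (tpm x₂ y₂)⟫
        = ∑ k : ι, ∑ l : ι,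
            ⟪tpm x₁ (θ (f l)), Fs T (tpm x₂ (θ (f k)))⟫
              * ⟪tpm (f l) y₁, Fs S (tpm (f k) y₂)⟫ := by
    intro T S x₁ x₂ y₁ y₂
    rw [hFs]
    have hTS : (T * S) (tmp y₂ (θ.symm y₁)) = T (S (tmp y₂ (θ.symm y₁))) := rfl
    have hrep : S (tmp y₂ (θ.symm y₁))
        = ∑ p : ι × ι, ⟪b p, S (tmp y₂ (θ.symm y₁))⟫ • b p :=
      (b.sum_repr' _).symm
    rw [hTS]
    conv_lhs => rw [hrep]
    rw [map_sum, inner_sum]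
    rw [Fintype.sum_prod_type]
    refine Finset.sum_congr rfl fun k _ => Finset.sum_congr rfl fun l _ => ?_
    have hbkl : b (k, l) = tmp (θ (f k)) (f l) := by
      rw [hb, OrthonormalBasis.coe_mk]
    rw [ContinuousLinearMap.map_smul, inner_smul_right, hbkl]
    have e1 : ⟪tmp (θ x₂) x₁, T (tmp (θ (f k)) (f l))⟫
        = ⟪tpm x₁ (θ (f l)), Fs T (tpm x₂ (θ (f k)))⟫ := by
      have h := hFs T x₁ x₂ (θ (f l)) (θ (f k))
      rw [θ.symm_apply_apply] at h
      exact h.symm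
    have e2 : ⟪tmp (θ (f k)) (f l), S (tmp y₂ (θ.symm y₁))⟫
        = ⟪tpm (f l) y₁, Fs S (tpm (f k) y₂)⟫ :=
      (hFs S (f l) (f k) y₁ y₂).symm
    rw [e1, e2]
    ring
  -- positivity is preserved by composition
  have mulP : ∀ T S : Hmp →L[ℂ] Hmp, (∀ w : Hpm, 0 ≤ ⟪w, Fs T w⟫) →
      (∀ w : Hpm, 0 ≤ ⟪w, Fs S w⟫) → ∀ w : Hpm, 0 ≤ ⟪w, Fs (T * S) w⟫ := by
    intro T S hT hS w
    obtain ⟨c, hc⟩ := Finsupp.mem_span_range_iff_exists_finsupp.mp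
      (hpm_span (Submodule.mem_top : w ∈ (⊤ : Submodule ℂ Hpm)))
    rw [← hc, Finsupp.sum, RP_sesq_expand]
    have expand : (∑ i ∈ c.support, ∑ j ∈ c.support,
          (starRingEnd ℂ) (c i) * c j * ⟪tpm i.1 i.2, Fs (T * S) (tpm j.1 j.2)⟫)
        = ∑ i ∈ c.support, ∑ j ∈ c.support, ∑ k : ι, ∑ l : ι,
            ⟪(c i) • tpm i.1 (θ (f l)), Fs T ((c j) • tpm j.1 (θ (f k)))⟫
              * ⟪tpm (f l) i.2, Fs S (tpm (f k) j.2)⟫ := by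
      refine Finset.sum_congr rfl fun i _ => Finset.sum_congr rfl fun j _ => ?_
      rw [kernel T S i.1 j.1 i.2 j.2, Finset.mul_sum]
      refine Finset.sum_congr rfl fun k _ => ?_
      rw [Finset.mul_sum]
      refine Finset.sum_congr rfl fun l _ => ?_
      rw [ContinuousLinearMap.map_smul, inner_smul_left, inner_smul_right]
      ring
    rw [expand]
    exact RP_psd_double' (Fs T) (Fs S) hT hS c.support
      (fun i l => c i • tpm i.1 (θ (f l))) (fun i l => tpm (f l) i.2)
  -- positivity of all powers of `-H`
  have powP : ∀ n : ℕ, ∀ w : Hpm, 0 ≤ ⟪w, Fs ((-H) ^ (n + 1)) w⟫ := by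
    intro n
    induction n with
    | zero => simpa using hpos
    | succ n ih =>
      have h := mulP ((-H) ^ (n + 1)) (-H) ih hpos
      intro w
      have hpow : (-H) ^ (n + 2) = (-H) ^ (n + 1) * (-H) := pow_succ _ _
      rw [hpow]
      exact h w
  -- each term of the exponential series is nonnegative
  set v : Hmp := tmp (θ x) x with hv
  set v' : Hmp := tmp (θ x') x' with hv'
  have hterm : ∀ n : ℕ,
      0 ≤ ⟪v', (((n.factorial : ℂ)⁻¹ • ((-β : ℂ) • H) ^ n)) v⟫ := by
    intro n
    have hcoef : ((n.factorial : ℂ)⁻¹ • ((-β : ℂ) • H) ^ n)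
        = ((((n.factorial : ℝ))⁻¹ * β ^ n : ℝ) : ℂ) • (-H) ^ n := by
      have hH : (-H) = (-1 : ℂ) • H := by simp
      rw [hH, smul_pow, smul_pow, smul_smul, smul_smul]
      congr 1
      push_cast
      ring
    rw [hcoef, ContinuousLinearMap.smul_apply, inner_smul_right]
    refine mul_nonneg ?_ ?_
    · exact Complex.zero_le_real.mpr (by positivity)
    · cases n with
      | zero =>
        simp only [pow_zero, ContinuousLinearMap.one_apply]
        rw [hv, hv', htmp, ← hθ x x', ← inner_conj_symm x x']
        exact star_mul_self_nonneg _
      | succ m =>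
        have h := key ((-H) ^ (m + 1)) x x'
        rw [← hv, ← hv'] at h
        rw [← h]
        exact powP m _
  -- sum the series
  have hsum0 : HasSum (fun n : ℕ => (n.factorial : ℂ)⁻¹ • ((-β : ℂ) • H) ^ n)
      (NormedSpace.exp ((-β : ℂ) • H)) :=
    NormedSpace.exp_series_hasSum_exp' _
  set φ : (Hmp →L[ℂ] Hmp) →L[ℂ] ℂ :=
    (innerSL ℂ v').comp (ContinuousLinearMap.apply ℂ Hmp v) with hφ
  have hφ_apply : ∀ M : Hmp →L[ℂ] Hmp, φ M = ⟪v', M v⟫ := fun M => rfl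
  have hsum : HasSum (fun n : ℕ => ⟪v', (((n.factorial : ℂ)⁻¹ • ((-β : ℂ) • H) ^ n)) v⟫)
      ⟪v', NormedSpace.exp ((-β : ℂ) • H) v⟫ := by
    have := hsum0.mapL φ
    simpa [hφ_apply] using this
  obtain ⟨hre, him⟩ := (Complex.hasSum_iff _ _).mp hsum
  rw [Complex.nonneg_iff]
  constructor
  · refine hre.nonneg fun n => ?_
    exact (Complex.nonneg_iff.mp (hterm n)).1
  · have hzero : ∀ n : ℕ,
        (⟪v', (((n.factorial : ℂ)⁻¹ • ((-β : ℂ) • H) ^ n)) v⟫ : ℂ).im = 0 := fun n =>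
      ((Complex.nonneg_iff.mp (hterm n)).2).symm
    have : HasSum (fun _ : ℕ => (0 : ℝ))
        (⟪v', NormedSpace.exp ((-β : ℂ) • H) v⟫ : ℂ).im := by
      convert him using 1
      funext n
      exact (hzero n).symm
    simpa using hasSum_zero.unique this
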